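/- Let A = ⊕_{k≥0} A_k be a finitely generated commutative graded algebra over A₀, and let θ(y) = y + ∑_{k≥0} a_k y^{−k} ∈ A⟦y^{−1}⟧[y] be a formal Laurent series with a_k ∈ A_{k+1} for every k ≥ 0. Then η(w) := w·exp(−∑_{k≥1} (1/k)·([y^0] θ^k)·w^{−k}) is a well-defined element of A⟦w^{−1}⟧[w] of the form η(w) = w + ∑_{k≥0} b_k w^{−k}, and it is a compositional inverse of θ, i.e. θ(η(w)) = w. -/

import Mathlib

open PowerSeries Finset
namespace EtaAux
set_option linter.unusedSectionVars false
variable {A : Type*} [CommRing A] [Algebra ℚ A]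

lemma nsmul_cancel {m : ℕ} (hm : m ≠ 0) {x y : A} (h : m • x = m • y) : x = y := by
  have := congrArg (fun z => ((m:ℚ))⁻¹ • z) h
  simpa [← Nat.cast_smul_eq_nsmul ℚ, smul_smul,
    inv_mul_cancel₀ (Nat.cast_ne_zero (R := ℚ).2 hm)] using this

lemma coeff_pow_eq_zero {ψ : PowerSeries A} (hψ : constantCoeff ψ = 0) {n j : ℕ}
    (h : n < j) : coeff n (ψ ^ j) = 0 := by
  have : (X : PowerSeries A) ^ j ∣ ψ ^ j :=
    pow_dvd_pow_of_dvd (PowerSeries.X_dvd_iff.2 hψ) j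
  exact PowerSeries.X_pow_dvd_iff.1 this n h

lemma coeff_eval₂ {ψ : PowerSeries A} (hψ : constantCoeff ψ = 0) (P : Polynomial A) (n : ℕ) :
    coeff n (Polynomial.eval₂ (PowerSeries.C (R := A)) ψ P)
      = ∑ j ∈ range (n + 1), P.coeff j * coeff n (ψ ^ j) := by
  rw [Polynomial.eval₂_eq_sum, Polynomial.sum, map_sum]
  have h1 : ∀ j ∈ P.support, coeff n (PowerSeries.C (R := A) (P.coeff j) * ψ ^ j)
      = P.coeff j * coeff n (ψ ^ j) := fun j _ => PowerSeries.coeff_C_mul _ _ _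
  rw [Finset.sum_congr rfl h1]
  rw [Finset.sum_subset (Finset.subset_union_left : P.support ⊆ P.support ∪ range (n+1))
    (fun j _ hj => by rw [Polynomial.notMem_support_iff.1 hj, zero_mul])]
  exact (Finset.sum_subset (Finset.subset_union_right : range (n+1) ⊆ P.support ∪ range (n+1))
    (fun j _ hj => by
      rw [coeff_pow_eq_zero hψ (lt_of_lt_of_le (Nat.lt_succ_self n) (by simpa using hj)),
        mul_zero])).symm

/-- composition of power series, f ∘ ψ, defined by truncation. -/
noncomputable def pc (f ψ : PowerSeries A) : PowerSeries A :=
  PowerSeries.mk fun n => coeff n (Polynomial.eval₂ (PowerSeries.C (R := A)) ψ (trunc (n+1) f))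

lemma coeff_pc {ψ : PowerSeries A} (hψ : constantCoeff ψ = 0) (f : PowerSeries A) (n : ℕ) :
    coeff n (pc f ψ) = ∑ j ∈ range (n + 1), coeff j f * coeff n (ψ ^ j) := by
  rw [pc, coeff_mk, coeff_eval₂ hψ]
  refine Finset.sum_congr rfl fun j hj => ?_
  rw [coeff_trunc, if_pos (mem_range.1 hj)]

lemma coeff_pc_eval {ψ : PowerSeries A} (hψ : constantCoeff ψ = 0) (f : PowerSeries A)
    {a N : ℕ} (haN : a < N) :
    coeff a (pc f ψ) = coeff a (Polynomial.eval₂ (PowerSeries.C (R := A)) ψ (trunc N f)) := by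
  rw [coeff_pc hψ, coeff_eval₂ hψ]
  refine Finset.sum_congr rfl fun j hj => ?_
  rw [coeff_trunc, if_pos (lt_of_le_of_lt (Nat.lt_succ_iff.1 (mem_range.1 hj)) haN)]

lemma coeff_pc_congr {ψ χ : PowerSeries A} (hψ : constantCoeff ψ = 0)
    (hχ : constantCoeff χ = 0) (f : PowerSeries A) {n : ℕ}
    (h : ∀ m < n, coeff m ψ = coeff m χ) {m : ℕ} (hm : m < n) :
    coeff m (pc f ψ) = coeff m (pc f χ) := by
  have hd : (X : PowerSeries A) ^ n ∣ ψ - χ := by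
    rw [PowerSeries.X_pow_dvd_iff]; intro i hi; rw [map_sub, h i hi, sub_self]
  rw [coeff_pc hψ, coeff_pc hχ]
  refine Finset.sum_congr rfl fun j _ => ?_
  congr 1
  have : (X : PowerSeries A) ^ n ∣ ψ ^ j - χ ^ j :=
    dvd_trans hd (sub_dvd_pow_sub_pow ψ χ j)
  have := PowerSeries.X_pow_dvd_iff.1 this m hm
  rw [map_sub, sub_eq_zero] at this; exact this

lemma pc_add {ψ : PowerSeries A} (hψ : constantCoeff ψ = 0) (f g : PowerSeries A) :
    pc (f + g) ψ = pc f ψ + pc g ψ := by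
  ext n; rw [map_add, coeff_pc hψ, coeff_pc hψ, coeff_pc hψ, ← Finset.sum_add_distrib]
  exact Finset.sum_congr rfl fun j _ => by rw [map_add, add_mul]

lemma pc_one {ψ : PowerSeries A} (hψ : constantCoeff ψ = 0) : pc 1 ψ = 1 := by
  ext n; rw [coeff_pc hψ]
  rw [Finset.sum_eq_single 0]
  · simp
  · intro j _ hj; rw [PowerSeries.coeff_one, if_neg hj, zero_mul]
  · simp

lemma pc_mul {ψ : PowerSeries A} (hψ : constantCoeff ψ = 0) (f g : PowerSeries A) :
    pc (f * g) ψ = pc f ψ * pc g ψ := by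
  ext n
  have e1 : coeff n (pc (f * g) ψ)
      = coeff n (Polynomial.eval₂ (PowerSeries.C (R := A)) ψ (trunc (n+1) f * trunc (n+1) g)) := by
    rw [coeff_pc hψ, coeff_eval₂ hψ]
    refine Finset.sum_congr rfl fun j hj => ?_
    have hjn : j ≤ n := Nat.lt_succ_iff.1 (mem_range.1 hj)
    congr 1
    rw [Polynomial.coeff_mul, PowerSeries.coeff_mul]
    refine Finset.sum_congr rfl fun p hp => ?_
    have h1 : p.1 ≤ j := le_of_add_le_left (le_of_eq (Finset.HasAntidiagonal.mem_antidiagonal.1 hp))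
    have h2 : p.2 ≤ j := le_of_add_le_right (le_of_eq (Finset.HasAntidiagonal.mem_antidiagonal.1 hp))
    rw [coeff_trunc, coeff_trunc, if_pos (lt_of_le_of_lt (h1.trans hjn) (Nat.lt_succ_self n)),
      if_pos (lt_of_le_of_lt (h2.trans hjn) (Nat.lt_succ_self n))]
  rw [e1, Polynomial.eval₂_mul, PowerSeries.coeff_mul, PowerSeries.coeff_mul]
  refine Finset.sum_congr rfl fun p hp => ?_
  have h1 : p.1 ≤ n := le_of_add_le_left (le_of_eq (Finset.HasAntidiagonal.mem_antidiagonal.1 hp))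
  have h2 : p.2 ≤ n := le_of_add_le_right (le_of_eq (Finset.HasAntidiagonal.mem_antidiagonal.1 hp))
  rw [coeff_pc_eval hψ f (Nat.lt_succ_of_le h1), coeff_pc_eval hψ g (Nat.lt_succ_of_le h2)]

lemma pc_pow {ψ : PowerSeries A} (hψ : constantCoeff ψ = 0) (f : PowerSeries A) (k : ℕ) :
    pc (f ^ k) ψ = (pc f ψ) ^ k := by
  induction k with
  | zero => simpa using pc_one hψ
  | succ k ih => rw [pow_succ, pc_mul hψ, ih, pow_succ]

lemma constantCoeff_pc {ψ : PowerSeries A} (hψ : constantCoeff ψ = 0) (f : PowerSeries A) :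
    constantCoeff (pc f ψ) = constantCoeff f := by
  rw [← coeff_zero_eq_constantCoeff, coeff_pc hψ]
  simp


lemma poly_chain (ψ : PowerSeries A) (P : Polynomial A) :
    d⁄dX A (Polynomial.eval₂ (PowerSeries.C (R := A)) ψ P)
      = Polynomial.eval₂ (PowerSeries.C (R := A)) ψ (Polynomial.derivative P) * d⁄dX A ψ := by
  induction P using Polynomial.induction_on with
  | C a => simp
  | add p q hp hq =>
      rw [Polynomial.eval₂_add, map_add, hp, hq, map_add, Polynomial.eval₂_add, add_mul]
  | monomial a n ih =>
      rw [Polynomial.eval₂_mul, Polynomial.eval₂_C, Polynomial.eval₂_pow, Polynomial.eval₂_X,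
        Derivation.leibniz, Derivation.leibniz_pow, PowerSeries.derivative_C,
        Polynomial.derivative_C_mul_X_pow, Polynomial.eval₂_mul, Polynomial.eval₂_C,
        Polynomial.eval₂_pow, Polynomial.eval₂_X]
      simp only [smul_eq_mul, zero_mul, add_zero, smul_smul, map_mul, map_natCast,
        nsmul_eq_mul]
      ring

lemma pc_chain {ψ : PowerSeries A} (hψ : constantCoeff ψ = 0) (f : PowerSeries A) :
    d⁄dX A (pc f ψ) = pc (d⁄dX A f) ψ * d⁄dX A ψ := by
  ext n
  have e1 : coeff n (d⁄dX A (pc f ψ))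
      = coeff n (d⁄dX A (Polynomial.eval₂ (PowerSeries.C (R := A)) ψ (trunc (n+2) f))) := by
    rw [PowerSeries.coeff_derivative, PowerSeries.coeff_derivative,
      coeff_pc_eval hψ f (Nat.lt_succ_self (n+1))]
  rw [e1, poly_chain, PowerSeries.coeff_mul, PowerSeries.coeff_mul]
  refine Finset.sum_congr rfl fun p hp => ?_
  have h1 : p.1 ≤ n := le_of_add_le_left (le_of_eq (Finset.HasAntidiagonal.mem_antidiagonal.1 hp))
  congr 1
  rw [coeff_eval₂ hψ, coeff_pc hψ]
  refine Finset.sum_congr rfl fun j hj => ?_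
  have hj1 : j ≤ p.1 := Nat.lt_succ_iff.1 (mem_range.1 hj)
  congr 1
  rw [Polynomial.coeff_derivative, PowerSeries.coeff_derivative, coeff_trunc,
    if_pos (by omega)]

noncomputable def expc (g : PowerSeries A) : PowerSeries A :=
  PowerSeries.mk fun n => ∑ j ∈ range (n+1), (j.factorial : ℚ)⁻¹ • coeff n (g ^ j)

noncomputable def eS (g : PowerSeries A) (N : ℕ) : PowerSeries A :=
  ∑ j ∈ range (N+1), (j.factorial : ℚ)⁻¹ • g ^ j

lemma coeff_qsmul (q : ℚ) (f : PowerSeries A) (n : ℕ) :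
    coeff n (q • f) = q • coeff n f := rfl

lemma coeff_eS (g : PowerSeries A) (N n : ℕ) :
    coeff n (eS g N) = ∑ j ∈ range (N+1), (j.factorial : ℚ)⁻¹ • coeff n (g ^ j) := by
  rw [eS, map_sum]; rfl

lemma coeff_expc_eS {g : PowerSeries A} (hg : constantCoeff g = 0) {n N : ℕ} (h : n ≤ N) :
    coeff n (expc g) = coeff n (eS g N) := by
  rw [coeff_eS, expc, coeff_mk]
  refine Finset.sum_subset (Finset.range_subset_range.2 (Nat.succ_le_succ h)) fun j _ hj => ?_
  rw [coeff_pow_eq_zero hg (by simp only [Finset.mem_range, not_lt] at hj; omega), smul_zero]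

lemma constantCoeff_expc (g : PowerSeries A) (hg : constantCoeff g = 0) :
    constantCoeff (expc g) = 1 := by
  rw [← coeff_zero_eq_constantCoeff, expc, coeff_mk]
  rw [Finset.sum_range_succ']
  simp only [Nat.factorial_succ]
  rw [Finset.sum_eq_zero, zero_add]
  · simp
  · intro j _
    rw [pow_succ, coeff_zero_eq_constantCoeff, map_mul, hg, mul_zero, smul_zero]

lemma derivative_qsmul (q : ℚ) (f : PowerSeries A) :
    d⁄dX A (q • f) = q • d⁄dX A f := by
  ext n
  rw [coeff_qsmul, PowerSeries.coeff_derivative, PowerSeries.coeff_derivative, coeff_qsmul,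
    smul_mul_assoc]

lemma derivative_eS (g : PowerSeries A) (N : ℕ) :
    d⁄dX A (eS g (N+1)) = eS g N * d⁄dX A g := by
  rw [eS, map_sum]
  rw [Finset.sum_congr rfl fun j (_ : j ∈ range (N+2)) => derivative_qsmul _ _]
  rw [Finset.sum_range_succ']
  have h0 : (Nat.factorial 0 : ℚ)⁻¹ • d⁄dX A ((g : PowerSeries A) ^ 0) = 0 := by
    simp
  rw [h0, add_zero]
  have h1 : ∀ j, (Nat.factorial (j+1) : ℚ)⁻¹ • d⁄dX A (g ^ (j+1))
      = (Nat.factorial j : ℚ)⁻¹ • (g ^ j) * d⁄dX A g := by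
    intro j
    rw [Derivation.leibniz_pow, Nat.add_sub_cancel, smul_eq_mul,
      ← Nat.cast_smul_eq_nsmul ℚ, smul_smul, ← smul_mul_assoc]
    congr 2
    rw [Nat.factorial_succ]
    push_cast
    field_simp
  rw [Finset.sum_congr rfl fun j _ => h1 j, ← Finset.sum_mul, eS]

lemma expc_ode {g : PowerSeries A} (hg : constantCoeff g = 0) :
    d⁄dX A (expc g) = expc g * d⁄dX A g := by
  ext n
  have e1 : coeff n (d⁄dX A (expc g)) = coeff n (d⁄dX A (eS g (n+1))) := by
    rw [PowerSeries.coeff_derivative, PowerSeries.coeff_derivative,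
      coeff_expc_eS hg (le_refl (n+1))]
  rw [e1, derivative_eS, PowerSeries.coeff_mul, PowerSeries.coeff_mul]
  refine Finset.sum_congr rfl fun p hp => ?_
  have h1 : p.1 ≤ n := le_of_add_le_left (le_of_eq (Finset.HasAntidiagonal.mem_antidiagonal.1 hp))
  rw [coeff_expc_eS hg h1]

lemma ode_unique {Q₁ Q₂ h : PowerSeries A} (h1 : d⁄dX A Q₁ = Q₁ * h) (h2 : d⁄dX A Q₂ = Q₂ * h)
    (hc : constantCoeff Q₁ = constantCoeff Q₂) : Q₁ = Q₂ := by
  ext n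
  induction n using Nat.strong_induction_on with
  | _ n ih =>
    match n with
    | 0 => simpa [coeff_zero_eq_constantCoeff] using hc
    | Nat.succ n =>
      have e1 : coeff n (d⁄dX A Q₁) = coeff n (d⁄dX A Q₂) := by
        rw [h1, h2, PowerSeries.coeff_mul, PowerSeries.coeff_mul]
        refine Finset.sum_congr rfl fun p hp => ?_
        have hp1 : p.1 ≤ n := le_of_add_le_left (le_of_eq (Finset.HasAntidiagonal.mem_antidiagonal.1 hp))
        rw [ih p.1 (Nat.lt_succ_of_le hp1)]
      rw [PowerSeries.coeff_derivative, PowerSeries.coeff_derivative] at e1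
      refine nsmul_cancel (Nat.succ_ne_zero n) (x := coeff (n+1) Q₁) (y := coeff (n+1) Q₂) ?_
      have : ((n:A) + 1) = ((n+1 : ℕ) : A) := by push_cast; ring
      rw [this] at e1
      rw [nsmul_eq_mul, nsmul_eq_mul, mul_comm, mul_comm ((n+1:ℕ):A)]
      exact e1

lemma expc_zero : expc (0 : PowerSeries A) = 1 := by
  ext n
  rw [expc, coeff_mk, Finset.sum_eq_single 0]
  · simp
  · intro j _ hj; rw [zero_pow hj, map_zero, smul_zero]
  · simp

lemma expc_mul {g h : PowerSeries A} (hg : constantCoeff g = 0)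
    (hh : constantCoeff h = 0) : expc (g + h) = expc g * expc h := by
  have hgh : constantCoeff (g + h) = 0 := by rw [map_add, hg, hh, add_zero]
  refine ode_unique (h := d⁄dX A (g + h)) (expc_ode hgh) ?_ ?_
  · rw [Derivation.leibniz, smul_eq_mul, smul_eq_mul, expc_ode hg, expc_ode hh, map_add]
    ring
  · rw [map_mul, constantCoeff_expc g hg, constantCoeff_expc h hh,
      constantCoeff_expc _ hgh, mul_one]

noncomputable def psiIter (f : PowerSeries A) : ℕ → PowerSeries A :=
  fun k => (fun χ => X * pc f χ)^[k] X

noncomputable def psi (f : PowerSeries A) : PowerSeries A :=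
  PowerSeries.mk fun n => coeff n (psiIter f n)

lemma psiIter_succ (f : PowerSeries A) (k : ℕ) :
    psiIter f (k+1) = X * pc f (psiIter f k) := Function.iterate_succ_apply' _ _ _

lemma constantCoeff_psiIter (f : PowerSeries A) (k : ℕ) :
    constantCoeff (psiIter f k) = 0 := by
  cases k with
  | zero => exact PowerSeries.constantCoeff_X
  | succ k => rw [psiIter_succ, map_mul, PowerSeries.constantCoeff_X, zero_mul]

lemma psiIter_dvd (f : PowerSeries A) (k : ℕ) :
    (X : PowerSeries A)^(k+1) ∣ psiIter f (k+1) - psiIter f k := by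
  induction k with
  | zero =>
      rw [pow_one, PowerSeries.X_dvd_iff, map_sub, constantCoeff_psiIter,
        constantCoeff_psiIter, sub_self]
  | succ k ih =>
      rw [psiIter_succ f k, psiIter_succ f (k+1), ← mul_sub, pow_succ']
      refine mul_dvd_mul_left _ ?_
      rw [PowerSeries.X_pow_dvd_iff]
      intro m hm
      rw [map_sub, sub_eq_zero]
      refine coeff_pc_congr (constantCoeff_psiIter f _) (constantCoeff_psiIter f _) f
        (n := k+1) (fun i hi => ?_) hm
      have := PowerSeries.X_pow_dvd_iff.1 ih i hi
      rw [map_sub, sub_eq_zero] at this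
      exact this

lemma coeff_psiIter_stable (f : PowerSeries A) {j k m : ℕ} (hj : j ≤ k) (hk : k ≤ m) :
    coeff j (psiIter f m) = coeff j (psiIter f k) := by
  induction m, hk using Nat.le_induction with
  | base => rfl
  | succ m hm ih =>
      rw [← ih]
      have := PowerSeries.X_pow_dvd_iff.1 (psiIter_dvd f m) j (by omega)
      rw [map_sub, sub_eq_zero] at this
      exact this

lemma coeff_psi (f : PowerSeries A) {n m : ℕ} (h : n ≤ m) :
    coeff n (psi f) = coeff n (psiIter f m) := by
  rw [psi, coeff_mk, coeff_psiIter_stable f (le_refl n) h]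

lemma constantCoeff_psi (f : PowerSeries A) : constantCoeff (psi f) = 0 := by
  rw [← coeff_zero_eq_constantCoeff, coeff_psi f (le_refl 0),
    coeff_zero_eq_constantCoeff, constantCoeff_psiIter]

lemma psi_fixed (f : PowerSeries A) : psi f = X * pc f (psi f) := by
  ext n
  cases n with
  | zero =>
      rw [coeff_zero_eq_constantCoeff, constantCoeff_psi, map_mul,
        PowerSeries.constantCoeff_X, zero_mul]
  | succ n =>
      rw [PowerSeries.coeff_succ_X_mul, coeff_psi f (le_refl (n+1)), psiIter_succ,
        PowerSeries.coeff_succ_X_mul]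
      exact (coeff_pc_congr (constantCoeff_psi f) (constantCoeff_psiIter f n) f (n := n+1)
        (fun i hi => coeff_psi f (Nat.lt_succ_iff.1 hi)) (Nat.lt_succ_self n)).symm ▸ rfl

lemma cast_cancel {m : ℕ} (hm : m ≠ 0) {x y : A} (h : (m:A) * x = (m:A) * y) : x = y := by
  refine nsmul_cancel hm ?_
  rw [nsmul_eq_mul, nsmul_eq_mul, h]

lemma deriv_pow_series (f : PowerSeries A) (k : ℕ) :
    d⁄dX A (f ^ k) = ((k:ℕ) : PowerSeries A) * (f ^ (k-1) * d⁄dX A f) := by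
  rw [Derivation.leibniz_pow, smul_eq_mul, nsmul_eq_mul]

lemma coeff_natCast_mul (k : ℕ) (g : PowerSeries A) (n : ℕ) :
    coeff n (((k:ℕ) : PowerSeries A) * g) = (k:A) * coeff n g := by
  rw [← map_natCast (PowerSeries.C (R := A)) k, PowerSeries.coeff_C_mul]

lemma psi_pow (f : PowerSeries A) (k : ℕ) :
    (psi f)^k = X^k * pc (f^k) (psi f) := by
  conv_lhs => rw [psi_fixed f]
  rw [mul_pow, pc_pow (constantCoeff_psi f)]

lemma coeff_psi_pow (f : PowerSeries A) (k m : ℕ) :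
    coeff (k + m) ((psi f)^k) = ∑ j ∈ range (m+1), coeff j (f^k) * coeff m ((psi f)^j) := by
  rw [psi_pow, add_comm k m, PowerSeries.coeff_X_pow_mul, coeff_pc (constantCoeff_psi f)]

lemma Pident {f : PowerSeries A} (hf : constantCoeff f = 1) :
    ∀ n k m : ℕ, n = k + m → 1 ≤ k →
      (n:A) * coeff n ((psi f)^k) = (k:A) * coeff m (f ^ n) := by
  intro n
  induction n using Nat.strong_induction_on with
  | _ n ih =>
    intro k m hn hk
    subst hn
    have hfk : ∀ j : ℕ, constantCoeff (f ^ j) = 1 := fun j => by rw [map_pow, hf, one_pow]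
    rcases Nat.eq_zero_or_pos m with h0 | hm
    · subst h0
      rw [coeff_psi_pow]
      simp [hfk]
    · set u := coeff (k + m) ((psi f)^k) with hu_def
      have hu : u = ∑ j ∈ range (m+1), coeff j (f^k) * coeff m ((psi f)^j) :=
        coeff_psi_pow f k m
      set S := ∑ j ∈ range (m+1), (j:A) * (coeff j (f^k) * coeff (m-j) (f ^ m))
        with hS_def
      -- Step A : m * u = S
      have stepA : (m:A) * u = S := by
        have e1 : (m:A) * u = ∑ j ∈ range (m+1),
            coeff j (f^k) * ((m:A) * coeff m ((psi f)^j)) := by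
          rw [hu, Finset.mul_sum]
          exact Finset.sum_congr rfl fun j _ => by ring
        rw [e1, hS_def]
        refine Finset.sum_congr rfl fun j hj => ?_
        rcases Nat.eq_zero_or_pos j with hj0 | hj1
        · subst hj0
          rw [pow_zero, PowerSeries.coeff_one, if_neg (by omega), mul_zero, mul_zero,
            Nat.cast_zero, zero_mul]
        · have hjm : j ≤ m := Nat.lt_succ_iff.1 (mem_range.1 hj)
          have := ih m (by omega) j (m-j) (by omega) hj1
          rw [this]; ring
      -- Step B : (k+m) * S = k * (m * coeff m f^(k+m))
      have stepB : ((k+m : ℕ):A) * S = (k:A) * ((m:A) * coeff m (f ^ (k+m))) := by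
        have eS : S = coeff (m-1) (d⁄dX A (f^k) * f^m) := by
          rw [PowerSeries.coeff_mul, Finset.Nat.sum_antidiagonal_eq_sum_range_succ_mk,
            show (m-1).succ = m from by omega, hS_def, Finset.sum_range_succ']
          rw [Nat.cast_zero, zero_mul, add_zero]
          refine Finset.sum_congr rfl fun i hi => ?_
          rw [PowerSeries.coeff_derivative]
          have : m - (i+1) = m - 1 - i := by omega
          rw [this]
          push_cast
          ring
        have eS2 : S = (k:A) * coeff (m-1) (d⁄dX A f * f^(k+m-1)) := by
          rw [eS, deriv_pow_series]
          have : f ^ (k-1) * d⁄dX A f * f^m = d⁄dX A f * f^(k+m-1) := by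
            rw [mul_comm (f ^ (k-1)) (d⁄dX A f), mul_assoc, ← pow_add,
              show k - 1 + m = k + m - 1 by omega]
          rw [mul_assoc, this, coeff_natCast_mul]
        rw [eS2]
        have e3 : ((k+m:ℕ):A) * ((k:A) * coeff (m-1) (d⁄dX A f * f^(k+m-1)))
            = (k:A) * coeff (m-1) (d⁄dX A (f ^ (k+m))) := by
          rw [deriv_pow_series f (k+m), coeff_natCast_mul]
          rw [mul_comm (f ^ (k+m-1)) (d⁄dX A f)]
          ring
        rw [e3, PowerSeries.coeff_derivative, show m - 1 + 1 = m by omega]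
        have : ((m-1 : ℕ):A) + 1 = (m:A) := by
          rw [show (m:ℕ) = (m-1)+1 by omega]
          push_cast
          ring
        rw [this]
        ring
      -- combine
      have final : (m:A) * (((k+m:ℕ)):A) * u = (m:A) * ((k:A) * coeff m (f^(k+m))) := by
        calc (m:A) * ((k+m:ℕ):A) * u = ((k+m:ℕ):A) * ((m:A) * u) := by ring
        _ = ((k+m:ℕ):A) * S := by rw [stepA]
        _ = (k:A) * ((m:A) * coeff m (f ^ (k+m))) := stepB
        _ = (m:A) * ((k:A) * coeff m (f^(k+m))) := by ring
      exact cast_cancel (show m ≠ 0 by omega) (by rw [← mul_assoc]; exact final)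

lemma cast_mul_eq_qsmul (n : ℕ) (x : A) : (n:A) * x = (n:ℚ) • x := by
  rw [Algebra.smul_def, map_natCast]

lemma cast_mul_inv_smul {n : ℕ} (hn : n ≠ 0) (x : A) : (n:A) * ((n:ℚ)⁻¹ • x) = x := by
  rw [mul_smul_comm, cast_mul_eq_qsmul, smul_smul,
    inv_mul_cancel₀ (Nat.cast_ne_zero (R := ℚ).2 hn), one_smul]

lemma inv_smul_of_cast_mul {n : ℕ} (hn : n ≠ 0) {x c : A} (h : (n:A) * x = c) :
    x = (n:ℚ)⁻¹ • c := by
  rw [← h, cast_mul_eq_qsmul, smul_smul,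
    inv_mul_cancel₀ (Nat.cast_ne_zero (R := ℚ).2 hn), one_smul]

noncomputable def logf (f : PowerSeries A) : PowerSeries A :=
  PowerSeries.mk fun n => if n = 0 then 0 else
    (n:ℚ)⁻¹ • coeff (n-1) (d⁄dX A f * PowerSeries.invOfUnit f 1)

lemma mul_invOfUnit_self {f : PowerSeries A} (hf : constantCoeff f = 1) :
    f * PowerSeries.invOfUnit f 1 = 1 :=
  PowerSeries.mul_invOfUnit f 1 (by rw [hf, Units.val_one])

lemma constantCoeff_logf (f : PowerSeries A) : constantCoeff (logf f) = 0 := by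
  rw [logf, ← coeff_zero_eq_constantCoeff, coeff_mk, if_pos rfl]

lemma deriv_logf (f : PowerSeries A) :
    d⁄dX A (logf f) = d⁄dX A f * PowerSeries.invOfUnit f 1 := by
  ext n
  rw [PowerSeries.coeff_derivative, logf, coeff_mk, if_neg (Nat.succ_ne_zero n),
    Nat.add_sub_cancel]
  rw [show ((n:A)+1) = ((n+1:ℕ):A) by push_cast; ring, mul_comm,
    cast_mul_inv_smul (Nat.succ_ne_zero n)]

lemma f_mul_deriv_logf {f : PowerSeries A} (hf : constantCoeff f = 1) :
    f * d⁄dX A (logf f) = d⁄dX A f := by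
  rw [deriv_logf]
  calc f * (d⁄dX A f * PowerSeries.invOfUnit f 1)
      = d⁄dX A f * (f * PowerSeries.invOfUnit f 1) := by ring
  _ = d⁄dX A f := by rw [mul_invOfUnit_self hf, mul_one]

noncomputable def gser (f : PowerSeries A) : PowerSeries A :=
  PowerSeries.mk fun n => if n = 0 then 0 else (n:ℚ)⁻¹ • coeff n (f^n)

lemma constantCoeff_gser (f : PowerSeries A) : constantCoeff (gser f) = 0 := by
  rw [gser, ← coeff_zero_eq_constantCoeff, coeff_mk, if_pos rfl]

lemma pc_logf_psi {f : PowerSeries A} (hf : constantCoeff f = 1) :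
    pc (logf f) (psi f) = gser f := by
  have hψ := constantCoeff_psi f
  ext n
  rw [gser, coeff_mk]
  match n with
  | 0 =>
      rw [if_pos rfl, coeff_zero_eq_constantCoeff, constantCoeff_pc hψ, constantCoeff_logf]
  | Nat.succ n =>
      rw [if_neg (Nat.succ_ne_zero n)]
      refine inv_smul_of_cast_mul (Nat.succ_ne_zero n) ?_
      -- (n+1) * coeff (n+1) (pc L ψ) = coeff (n+1) (f^(n+1))
      have step1 : ((n+1:ℕ):A) * coeff (n+1) (pc (logf f) (psi f))
          = coeff n (d⁄dX A (logf f) * f^(n+1)) := by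
        rw [coeff_pc hψ, Finset.mul_sum, Finset.sum_range_succ']
        rw [show coeff 0 (logf f) = 0 from by
            rw [coeff_zero_eq_constantCoeff, constantCoeff_logf], zero_mul, mul_zero, add_zero]
        rw [PowerSeries.coeff_mul, Finset.Nat.sum_antidiagonal_eq_sum_range_succ_mk]
        refine Finset.sum_congr rfl fun i hi => ?_
        have hi1 : i ≤ n := Nat.lt_succ_iff.1 (mem_range.1 hi)
        have hP := Pident hf (n+1) (i+1) (n-i) (by omega) (by omega)
        show ((n+1:ℕ):A) * (coeff (i+1) (logf f) * coeff (n+1) ((psi f)^(i+1)))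
          = coeff i (d⁄dX A (logf f)) * coeff (n-i) (f^(n+1))
        rw [PowerSeries.coeff_derivative]
        calc ((n+1:ℕ):A) * (coeff (i+1) (logf f) * coeff (n+1) ((psi f)^(i+1)))
            = coeff (i+1) (logf f) * (((n+1:ℕ):A) * coeff (n+1) ((psi f)^(i+1))) := by ring
        _ = coeff (i+1) (logf f) * (((i+1:ℕ):A) * coeff (n-i) (f^(n+1))) := by rw [hP]
        _ = coeff (i+1) (logf f) * ((i:A)+1) * coeff (n-i) (f^(n+1)) := by push_cast; ring
      rw [step1]
      -- coeff n (dL * f^(n+1)) = coeff (n+1) (f^(n+1))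
      have e1 : d⁄dX A (logf f) * f^(n+1) = d⁄dX A f * f^n := by
        rw [pow_succ']
        calc d⁄dX A (logf f) * (f * f^n) = (f * d⁄dX A (logf f)) * f^n := by ring
        _ = d⁄dX A f * f^n := by rw [f_mul_deriv_logf hf]
      rw [e1]
      refine cast_cancel (Nat.succ_ne_zero n) (x := coeff n (d⁄dX A f * f^n)) ?_
      have e2 : ((n+1:ℕ) : PowerSeries A) * (d⁄dX A f * f^n) = d⁄dX A (f^(n+1)) := by
        rw [deriv_pow_series f (n+1), Nat.add_sub_cancel]
        ring
      calc ((n+1:ℕ):A) * coeff n (d⁄dX A f * f^n)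
          = coeff n (((n+1:ℕ) : PowerSeries A) * (d⁄dX A f * f^n)) := by
            rw [coeff_natCast_mul]
      _ = coeff n (d⁄dX A (f^(n+1))) := by rw [e2]
      _ = ((n+1:ℕ):A) * coeff (n+1) (f^(n+1)) := by
            rw [PowerSeries.coeff_derivative, mul_comm]
            push_cast
            ring

lemma pc_f_psi_eq_expc {f : PowerSeries A} (hf : constantCoeff f = 1) :
    pc f (psi f) = expc (gser f) := by
  have hψ := constantCoeff_psi f
  have hG : constantCoeff (pc (logf f) (psi f)) = 0 := by
    rw [constantCoeff_pc hψ, constantCoeff_logf]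
  have h1 : d⁄dX A (pc f (psi f)) = pc f (psi f) * d⁄dX A (pc (logf f) (psi f)) := by
    rw [pc_chain hψ f, ← f_mul_deriv_logf hf, pc_mul hψ, pc_chain hψ (logf f)]
    ring
  have h2 : d⁄dX A (expc (gser f)) = expc (gser f) * d⁄dX A (pc (logf f) (psi f)) := by
    rw [pc_logf_psi hf, expc_ode (constantCoeff_gser f)]
  refine ode_unique h1 h2 ?_
  rw [constantCoeff_pc hψ, hf, constantCoeff_expc _ (constantCoeff_gser f)]

lemma expc_neg_mul {f : PowerSeries A} (hf : constantCoeff f = 1) :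
    expc (-(gser f)) * expc (gser f) = 1 := by
  have hg := constantCoeff_gser f
  have hng : constantCoeff (-(gser f)) = 0 := by rw [map_neg, hg, neg_zero]
  rw [← expc_mul hng hg, neg_add_cancel, expc_zero]

lemma final_ps {f : PowerSeries A} (hf : constantCoeff f = 1) :
    expc (-(gser f)) + X * (PowerSeries.mk fun N =>
        ∑ k ∈ range (N+1), coeff (k+1) f * coeff (N-k) ((expc (gser f))^k)) = 1 := by
  set P := expc (gser f) with hPdef
  set E := expc (-(gser f)) with hEdef
  have hψ := constantCoeff_psi f
  have hP : pc f (psi f) = P := pc_f_psi_eq_expc hf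
  have hEP : E * P = 1 := expc_neg_mul hf
  have hψX : psi f = X * P := by rw [← hP]; exact psi_fixed f
  have hD : P = 1 + pc (f - 1) (psi f) := by
    have e := pc_add hψ 1 (f - 1)
    rw [show (1 : PowerSeries A) + (f - 1) = f from by ring, pc_one hψ] at e
    rw [← hP, e]
  set D := pc (f - 1) (psi f) with hDdef
  have key : X * (PowerSeries.mk fun N =>
      ∑ k ∈ range (N+1), coeff (k+1) f * coeff (N-k) (P^k)) = E * D := by
    ext N
    match N with
    | 0 =>
        rw [coeff_zero_eq_constantCoeff, map_mul, map_mul, PowerSeries.constantCoeff_X,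
          zero_mul, hDdef, constantCoeff_pc hψ, map_sub, hf, map_one, sub_self, mul_zero]
    | Nat.succ M =>
        rw [PowerSeries.coeff_succ_X_mul, coeff_mk]
        -- Σ
        set Sg := ∑ k ∈ range (M+2), PowerSeries.C (R := A) (coeff (k+1) f) * (psi f)^(k+1)
          with hSgdef
        have hDn : ∀ b ≤ M+1, coeff b D = coeff b Sg := by
          intro b hb
          rw [hDdef, coeff_pc hψ, Finset.sum_range_succ']
          rw [show coeff 0 (f - 1) = 0 from by
            rw [coeff_zero_eq_constantCoeff, map_sub, hf, map_one, sub_self], zero_mul,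
            add_zero]
          rw [hSgdef, map_sum]
          have e1 : ∀ k, coeff b (PowerSeries.C (R := A) (coeff (k+1) f) * (psi f)^(k+1))
              = coeff (k+1) f * coeff b ((psi f)^(k+1)) := fun k =>
            PowerSeries.coeff_C_mul _ _ _
          rw [Finset.sum_congr rfl fun k _ => e1 k]
          have e0 : ∀ i, coeff (i+1) (f - 1) = coeff (i+1) f := fun i => by
            rw [map_sub, PowerSeries.coeff_one, if_neg (Nat.succ_ne_zero i), sub_zero]
          rw [Finset.sum_congr rfl fun i (_ : i ∈ range b) => by rw [e0 i]]
          refine Finset.sum_subset (Finset.range_subset_range.2 (show b ≤ M+2 by omega))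
            fun k _ hk => ?_
          rw [coeff_pow_eq_zero hψ (by simp only [Finset.mem_range, not_lt] at hk; omega),
            mul_zero]
        have e2 : coeff (M+1) (E * D) = coeff (M+1) (E * Sg) := by
          rw [PowerSeries.coeff_mul, PowerSeries.coeff_mul]
          refine Finset.sum_congr rfl fun p hp => ?_
          have hp2 : p.2 ≤ M+1 := le_of_add_le_right (le_of_eq (Finset.HasAntidiagonal.mem_antidiagonal.1 hp))
          rw [hDn p.2 hp2]
        have e3 : E * Sg = ∑ k ∈ range (M+2),
            PowerSeries.C (R := A) (coeff (k+1) f) * (X^(k+1) * P^k) := by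
          rw [hSgdef, Finset.mul_sum]
          refine Finset.sum_congr rfl fun k _ => ?_
          rw [hψX, mul_pow]
          calc E * (PowerSeries.C (R := A) (coeff (k+1) f) * (X^(k+1) * P^(k+1)))
              = PowerSeries.C (R := A) (coeff (k+1) f) * (X^(k+1) * P^k) * (E * P) := by ring
          _ = PowerSeries.C (R := A) (coeff (k+1) f) * (X^(k+1) * P^k) := by rw [hEP, mul_one]
        rw [e2, e3, map_sum]
        have e4 : ∀ k, coeff (M+1) (PowerSeries.C (R := A) (coeff (k+1) f) * (X^(k+1) * P^k))
            = coeff (k+1) f * (if k+1 ≤ M+1 then coeff (M+1-(k+1)) (P^k) else 0) := by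
          intro k
          rw [PowerSeries.coeff_C_mul, PowerSeries.coeff_X_pow_mul']
        have e5 : ∑ k ∈ range (M+2),
            (coeff (k+1) f * if k+1 ≤ M+1 then coeff (M+1-(k+1)) (P^k) else 0)
            = ∑ k ∈ range (M+1), coeff (k+1) f * coeff (M-k) (P^k) := by
          rw [Finset.sum_range_succ, if_neg (by omega), mul_zero, add_zero]
          refine Finset.sum_congr rfl fun k hk => ?_
          have hkM : k ≤ M := Nat.lt_succ_iff.1 (mem_range.1 hk)
          rw [if_pos (by omega), show M+1-(k+1) = M - k from by omega]
        rw [Finset.sum_congr rfl fun k _ => e4 k, e5]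
  rw [key]
  calc E + E * D = E * (1 + D) := by ring
  _ = E * P := by rw [← hD]
  _ = 1 := hEP

lemma single_int_mul_coeff (b : ℤ) (x : HahnSeries ℤ A) (m : ℤ) :
    (HahnSeries.single b (1:A) * x).coeff m = x.coeff (m - b) := by
  have := HahnSeries.coeff_single_mul_add (r := (1:A)) (x := x) (a := m - b) (b := b)
  rw [sub_add_cancel] at this
  rw [this, one_mul]

lemma ofPS_coeff (x : PowerSeries A) (m : ℤ) :
    (HahnSeries.ofPowerSeries ℤ A x).coeff m
      = if 0 ≤ m then PowerSeries.coeff m.toNat x else 0 := by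
  rcases le_or_gt 0 m with hm | hm
  · rw [if_pos hm, show m = ((m.toNat : ℕ) : ℤ) by omega]
    rw [HahnSeries.ofPowerSeries_apply_coeff]
    rw [Int.toNat_natCast]
  · rw [if_neg (not_le.2 hm), HahnSeries.ofPowerSeries_apply]
    refine HahnSeries.embDomain_notin_range ?_
    rintro ⟨n, hn⟩
    have hn : (n:ℤ) = m := hn
    omega

lemma hinv_pow_coeff (P : PowerSeries A) (j : ℕ) (m : ℤ) :
    ((HahnSeries.single (1:ℤ) (1:A) * HahnSeries.ofPowerSeries ℤ A P) ^ j).coeff m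
      = if 0 ≤ m - j then PowerSeries.coeff (m - j).toNat (P ^ j) else 0 := by
  rw [mul_pow, HahnSeries.single_pow, one_pow, ← map_pow, single_int_mul_coeff, ofPS_coeff]
  norm_num

lemma int_icc_sum (m : ℤ) (F : ℤ → A) (hm : 0 ≤ m) :
    ∑ k ∈ Finset.Icc (0:ℤ) m, F k = ∑ j ∈ range (m.toNat + 1), F (j:ℤ) := by
  refine Finset.sum_nbij' (fun k => k.toNat) (fun j => (j:ℤ)) ?_ ?_ ?_ ?_ ?_
  · intro a ha; simp only [Finset.mem_Icc] at ha; simp only [Finset.mem_range]; omega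
  · intro a ha; simp only [Finset.mem_range] at ha; simp only [Finset.mem_Icc]; omega
  · intro a ha; simp only [Finset.mem_Icc] at ha; omega
  · intro a ha; simp only [Finset.mem_range] at ha; omega
  · intro a ha; simp only [Finset.mem_Icc] at ha
    congr 1
    omega

end EtaAux

open PowerSeries Finset EtaAux



/-- The coefficients of the series
`η(w) = w·exp(−∑_{k≥1} (1/k)·([y^0] θ^k)·w^{−k})`, in the mirrored encoding where a formal
Laurent series in `w^{−1}` with finitely many positive powers of `w` is a `HahnSeries ℤ A`
in the variable `s = w^{−1}` (so index `m` records the coefficient of `w^{−m}`).  Here `θ`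
is encoded by `Θ` with `Θ.coeff k = a_k = [y^{-k}]θ`, so `[y^0]θ^k = (Θ^k).coeff 0`; the
exponential `exp(G) = ∑_j G^j/j!` of the power series
`G = −∑_{k≥1} (1/k)·([y^0]θ^k)·s^k` (zero constant term) is computed coefficientwise with
the valid truncation `j ≤ n`, and `η` is its shift by `s^{−1}`. -/
noncomputable def etaCoeff {A : Type*} [CommRing A] [Algebra ℚ A]
    (Θ : HahnSeries ℤ A) (m : ℤ) : A :=
  if 0 ≤ m + 1 then
    ∑ j ∈ Finset.range ((m + 1).toNat + 1),
      (j.factorial : ℚ)⁻¹ •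
        PowerSeries.coeff (R := A) (m + 1).toNat
          ((-(PowerSeries.mk fun k =>
            if k = 0 then 0 else (k : ℚ)⁻¹ • (Θ ^ k).coeff 0)) ^ j)
  else 0

/-- **Proposition (prop:agrees), part (1).** Let `A = ⊕_{k≥0} A_k` be a finitely generated
commutative graded algebra over `A₀` (a ℂ-algebra that is an integral domain, so in
particular a ℚ-algebra), and let `θ(y) = y + ∑_{k≥0} a_k y^{−k} ∈ A⟦y^{−1}⟧[y]` with
`a_k ∈ A_{k+1}` for all `k ≥ 0`.  Then
`η(w) = w·exp(−∑_{k≥1} (1/k)·([y^0]θ^k)·w^{−k})` is a well-defined element of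
`A⟦w^{−1}⟧[w]` of the form `η(w) = w + ∑_{k≥0} b_k w^{−k}`, and it is a compositional
inverse of `θ`: `θ(η(w)) = w`.

Encodings: Laurent series in `y^{−1}` (resp. `w^{−1}`) with finitely many positive powers
are `HahnSeries ℤ A` in `t = y^{−1}` (resp. `s = w^{−1}`); `θ` is encoded by `Θ` with
`Θ.coeff (−1) = 1`, `Θ.coeff j = 0` for `j < −1` and `Θ.coeff k = a_k ∈ A_{k+1}` for
`k ≥ 0`; `η` is encoded by `H` with coefficients `etaCoeff Θ`.  Its shape reads
`H.coeff (−1) = 1` and `H.coeff j = 0` for `j < −1`; `η` is then invertible (with inverse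
`Hinv` of order `1`) and `θ(η(w)) = η + ∑_{k≥0} a_k·η^{−k} = w` reads coefficientwise
`H.coeff m + ∑_{0≤k≤m} Θ.coeff k · (Hinv^k).coeff m = δ_{m,−1}` (the truncation at
`k = m` being valid since `Hinv^k` has order `k`). -/
theorem eta_is_compositional_inverse {A₀ A : Type*} [CommRing A₀] [CommRing A] [IsDomain A]
    [Algebra A₀ A] [Algebra ℚ A]
    (𝒜 : ℕ → Submodule A₀ A) [GradedAlgebra 𝒜]
    (hfg : (⊤ : Subalgebra A₀ A).FG)
    (Θ : HahnSeries ℤ A)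
    (hΘlow : ∀ j < (-1 : ℤ), Θ.coeff j = 0) (hΘ1 : Θ.coeff (-1) = 1)
    (hdeg : ∀ k : ℕ, Θ.coeff (k : ℤ) ∈ 𝒜 (k + 1)) :
    ∃ H : HahnSeries ℤ A,
      (∀ m : ℤ, H.coeff m = etaCoeff Θ m) ∧
      H.coeff (-1) = 1 ∧ (∀ j < (-1 : ℤ), H.coeff j = 0) ∧
      ∃ Hinv : HahnSeries ℤ A, H * Hinv = 1 ∧
        ∀ m : ℤ,
          (H.coeff m + ∑ k ∈ Finset.Icc (0 : ℤ) m, Θ.coeff k * (Hinv ^ k.toNat).coeff m)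
            = if m = -1 then 1 else 0 := by
  classical
  set fθ : PowerSeries A := PowerSeries.mk fun n => Θ.coeff ((n:ℤ) - 1) with hfθ
  have hf : constantCoeff fθ = 1 := by
    rw [hfθ, ← coeff_zero_eq_constantCoeff, coeff_mk]
    norm_num [hΘ1]
  have hΘeq : HahnSeries.single (-1:ℤ) (1:A) * HahnSeries.ofPowerSeries ℤ A fθ = Θ := by
    ext m
    rw [single_int_mul_coeff, ofPS_coeff]
    rcases le_or_gt (-1:ℤ) m with hm | hm
    · rw [if_pos (by omega), hfθ, coeff_mk]
      congr 1
      omega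
    · rw [if_neg (by omega), hΘlow m hm]
  have hΘpow : ∀ k : ℕ, (Θ ^ k).coeff 0 = PowerSeries.coeff k (fθ ^ k) := by
    intro k
    rw [← hΘeq, mul_pow, HahnSeries.single_pow, one_pow, ← map_pow, single_int_mul_coeff,
      ofPS_coeff]
    have h1 : (0:ℤ) - k • (-1:ℤ) = (k:ℤ) := by simp
    rw [h1, if_pos (by omega), Int.toNat_natCast]
  have hGn : constantCoeff (-(gser fθ)) = 0 := by
    rw [map_neg, constantCoeff_gser, neg_zero]
  have hG : gser fθ = PowerSeries.mk fun k =>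
      if k = 0 then 0 else (k:ℚ)⁻¹ • (Θ ^ k).coeff 0 := by
    ext n
    rw [gser, coeff_mk, coeff_mk, hΘpow n]
  set E := expc (-(gser fθ)) with hEdef
  set P := expc (gser fθ) with hPdef
  refine ⟨HahnSeries.single (-1:ℤ) 1 * HahnSeries.ofPowerSeries ℤ A E, ?_, ?_, ?_,
      HahnSeries.single (1:ℤ) 1 * HahnSeries.ofPowerSeries ℤ A P, ?_, ?_⟩
  · -- coefficients are etaCoeff
    intro m
    rw [single_int_mul_coeff, ofPS_coeff, show m - (-1) = m + 1 from by ring, etaCoeff]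
    rcases le_or_gt 0 (m+1) with hm | hm
    · rw [if_pos hm, if_pos hm, hEdef, expc, coeff_mk, ← hG]
    · rw [if_neg (not_le.2 hm), if_neg (not_le.2 hm)]
  · -- coeff (-1) = 1
    rw [single_int_mul_coeff, ofPS_coeff, if_pos (by omega),
      show ((-1:ℤ) - (-1)).toNat = 0 from by norm_num, coeff_zero_eq_constantCoeff]
    exact constantCoeff_expc _ hGn
  · -- low coefficients vanish
    intro j hj
    rw [single_int_mul_coeff, ofPS_coeff, if_neg (by omega)]
  · -- H * Hinv = 1
    rw [mul_mul_mul_comm, HahnSeries.single_mul_single, one_mul, neg_add_cancel,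
      HahnSeries.single_zero_one, one_mul, ← map_mul, expc_neg_mul hf, map_one]
  · -- the main identity
    intro m
    rcases lt_or_ge m 0 with hm | hm
    · rw [Finset.Icc_eq_empty (by omega), Finset.sum_empty, add_zero,
        single_int_mul_coeff, ofPS_coeff, show m - (-1) = m + 1 from by ring]
      rcases eq_or_ne m (-1) with h1 | h1
      · subst h1
        rw [if_pos (by omega), if_pos rfl]
        show PowerSeries.coeff ((-1:ℤ)+1).toNat E = 1
        rw [show ((-1:ℤ)+1).toNat = 0 from by omega, coeff_zero_eq_constantCoeff]
        exact constantCoeff_expc _ hGn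
      · rw [if_neg (by omega), if_neg h1]
    · rw [if_neg (by omega)]
      set M := m.toNat with hM
      have hsum : ∑ k ∈ Finset.Icc (0:ℤ) m, Θ.coeff k *
          ((HahnSeries.single (1:ℤ) (1:A) * HahnSeries.ofPowerSeries ℤ A P) ^ k.toNat).coeff m
          = ∑ j ∈ range (M + 1), PowerSeries.coeff (j+1) fθ *
              PowerSeries.coeff (M - j) (P ^ j) := by
        rw [int_icc_sum m _ hm]
        refine Finset.sum_congr rfl fun j hj => ?_
        have hjM : j ≤ M := Nat.lt_succ_iff.1 (mem_range.1 hj)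
        rw [Int.toNat_natCast, hinv_pow_coeff, if_pos (by omega)]
        have e1 : Θ.coeff (j:ℤ) = PowerSeries.coeff (j+1) fθ := by
          rw [hfθ, coeff_mk]
          congr 1
          push_cast
          ring
        rw [e1, show (m - (j:ℤ)).toNat = M - j from by omega]
      rw [single_int_mul_coeff, ofPS_coeff, show m - (-1) = m + 1 from by ring,
        if_pos (by omega), show (m+1).toNat = M + 1 from by omega, hsum]
      have hfin := congrArg (PowerSeries.coeff (M + 1)) (final_ps hf)
      rw [map_add, PowerSeries.coeff_succ_X_mul, coeff_mk, PowerSeries.coeff_one,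
        if_neg (Nat.succ_ne_zero M)] at hfin
      exact hfin
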